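/- Assume β ∈ [0,1] and M > 6. There exists a constant C > 0 (depending only on β and M) such that for all ω₁ > 1 one has C₃²³⁴[n⁰¹, n⁰¹, n⁰¹](ω₁) ≤ C · ω₁^{2β + 1/2 − M/2}. -/

import Mathlib

open MeasureTheory Real

noncomputable section

/-- Japanese bracket ⟨ω⟩ = (1 + ω²)^{1/2}. -/
def jb (ω : ℝ) : ℝ := Real.sqrt (1 + ω ^ 2)

/-- n⁰¹(ω) = ⟨ω⟩^{-M/2}. -/
def n01 (M : ℝ) (ω : ℝ) : ℝ := jb ω ^ (-(M / 2))

/-- The operator C₂₁²³⁴, with ω₂ = ω₃ + ω₄ − ω₁. -/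
def C21op (β : ℝ) (k l m : ℝ → ℝ) (ω₁ : ℝ) : ℝ :=
  64 * π ^ 3 * ω₁ ^ (β - 1/2) *
    ∫ ω₃ in (0:ℝ)..(ω₁ / 2), ∫ ω₄ in (ω₁ - ω₃)..ω₁,
      (ω₃ + ω₄ - ω₁) ^ (β + 1/2) * ω₃ ^ β * ω₄ ^ β *
        (k (ω₃ + ω₄ - ω₁) * l ω₃ * m ω₄)

/-- The operator C₂₂²³⁴, with ω₂ = ω₃ + ω₄ − ω₁. -/
def C22op (β : ℝ) (k l m : ℝ → ℝ) (ω₁ : ℝ) : ℝ :=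
  64 * π ^ 3 * ω₁ ^ (β - 1/2) *
    ∫ ω₃ in (ω₁ / 2)..ω₁, ∫ ω₄ in ω₃..ω₁,
      (ω₃ + ω₄ - ω₁) ^ (β + 1/2) * ω₃ ^ β * ω₄ ^ β *
        (k (ω₃ + ω₄ - ω₁) * l ω₃ * m ω₄)

/-- The operator C₃²³⁴, with ω₂ = ω₃ + ω₄ − ω₁. -/
def C3op (β : ℝ) (k l m : ℝ → ℝ) (ω₁ : ℝ) : ℝ :=
  64 * π ^ 3 * ω₁ ^ (β - 1/2) *
    ∫ ω₃ in (0:ℝ)..ω₁, ∫ ω₄ in Set.Ioi ω₁,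
      (ω₃ + ω₄ - ω₁) ^ β * ω₃ ^ (β + 1/2) * ω₄ ^ β *
        (k (ω₃ + ω₄ - ω₁) * l ω₃ * m ω₄)

/-- The operator C₁²³⁴, with ω₂ = ω₃ + ω₄ − ω₁. -/
def C1op (β : ℝ) (k l m : ℝ → ℝ) (ω₁ : ℝ) : ℝ :=
  64 * π ^ 3 * ω₁ ^ β *
    ∫ ω₃ in Set.Ioi ω₁, ∫ ω₄ in Set.Ioi ω₃,
      (ω₃ + ω₄ - ω₁) ^ β * ω₃ ^ β * ω₄ ^ β *
        (k (ω₃ + ω₄ - ω₁) * l ω₃ * m ω₄)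

/-- The full domain of integration {0 ≤ ω₃ ≤ ω₄, ω₃ + ω₄ ≥ ω₁} ⊂ ℝ². -/
def Dom (ω₁ : ℝ) : Set (ℝ × ℝ) := {p | 0 ≤ p.1 ∧ p.1 ≤ p.2 ∧ ω₁ ≤ p.1 + p.2}

/-- The cross-section factor min{√ω₁, √ω₂, √ω₃}, with ω₂ = ω₃ + ω₄ − ω₁,
where p = (ω₃, ω₄). -/
def crossMin (ω₁ : ℝ) (p : ℝ × ℝ) : ℝ :=
  min (Real.sqrt ω₁) (min (Real.sqrt (p.1 + p.2 - ω₁)) (Real.sqrt p.1))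

/-- The operator C^{j₁j₂j₃}[k,l,m](ω₁) where the factor is k(ω_{j₁}) l(ω_{j₂}) m(ω_{j₃}),
with ω₂ = ω₃ + ω₄ − ω₁ and p = (ω₃, ω₄); here the selection of frequencies is passed
as a function `sel : (ℝ × ℝ) → ℝ × ℝ × ℝ` giving (ω_{j₁}, ω_{j₂}, ω_{j₃}). -/
def Cfull (β : ℝ) (k l m : ℝ → ℝ) (sel : ℝ → ℝ × ℝ → ℝ × ℝ × ℝ) (ω₁ : ℝ) : ℝ :=
  64 * π ^ 3 * ω₁ ^ (β - 1/2) *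
    ∫ p in Dom ω₁,
      ((p.1 + p.2 - ω₁) * p.1 * p.2) ^ β * crossMin ω₁ p *
        (k (sel ω₁ p).1 * l (sel ω₁ p).2.1 * m (sel ω₁ p).2.2)

/-- C²³⁴[k,l,m](ω₁): integrand k(ω₂) l(ω₃) m(ω₄). -/
def C234 (β : ℝ) (k l m : ℝ → ℝ) : ℝ → ℝ :=
  Cfull β k l m (fun ω₁ p => (p.1 + p.2 - ω₁, p.1, p.2))

/-- C¹²⁴[k,l,m](ω₁): integrand k(ω₁) l(ω₂) m(ω₄). -/
def C124 (β : ℝ) (k l m : ℝ → ℝ) : ℝ → ℝ :=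
  Cfull β k l m (fun ω₁ p => (ω₁, p.1 + p.2 - ω₁, p.2))

/-- C¹³⁴[k,l,m](ω₁): integrand k(ω₁) l(ω₃) m(ω₄). -/
def C134 (β : ℝ) (k l m : ℝ → ℝ) : ℝ → ℝ :=
  Cfull β k l m (fun ω₁ p => (ω₁, p.1, p.2))

/-- C¹²³[k,l,m](ω₁): integrand k(ω₁) l(ω₂) m(ω₃). -/
def C123 (β : ℝ) (k l m : ℝ → ℝ) : ℝ → ℝ :=
  Cfull β k l m (fun ω₁ p => (ω₁, p.1 + p.2 - ω₁, p.1))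


open Set Filter

lemma jb_pos (ω : ℝ) : 0 < jb ω := by
  have : (0:ℝ) < 1 + ω ^ 2 := by positivity
  exact Real.sqrt_pos.2 this

lemma one_le_jb (ω : ℝ) : 1 ≤ jb ω := by
  have h := Real.sqrt_le_sqrt (show (1:ℝ) ≤ 1 + ω ^ 2 by nlinarith [sq_nonneg ω])
  rwa [Real.sqrt_one] at h

lemma le_jb {ω : ℝ} (hω : 0 ≤ ω) : ω ≤ jb ω := by
  have h := Real.sqrt_le_sqrt (show ω ^ 2 ≤ 1 + ω ^ 2 by linarith)
  rwa [Real.sqrt_sq hω] at h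

lemma n01_nonneg (M ω : ℝ) : 0 ≤ n01 M ω := Real.rpow_nonneg (Real.sqrt_nonneg _) _

lemma keyA {M c x : ℝ} (hc0 : 0 ≤ c) (hcM : c ≤ M / 2) (hx : 0 ≤ x) :
    x ^ c * n01 M x ≤ 1 := by
  simp only [n01]
  have h1 : x ^ c ≤ jb x ^ c := Real.rpow_le_rpow hx (le_jb hx) hc0
  calc x ^ c * jb x ^ (-(M/2)) ≤ jb x ^ c * jb x ^ (-(M/2)) :=
        mul_le_mul_of_nonneg_right h1 (Real.rpow_nonneg (Real.sqrt_nonneg _) _)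
    _ = jb x ^ (c + -(M/2)) := (Real.rpow_add (jb_pos x) _ _).symm
    _ ≤ 1 := Real.rpow_le_one_of_one_le_of_nonpos (one_le_jb x) (by linarith)

lemma keyB {M c x : ℝ} (hM : 0 ≤ M) (hx : 0 < x) :
    x ^ c * n01 M x ≤ x ^ (c - M / 2) := by
  simp only [n01]
  have h1 : jb x ^ (-(M/2)) ≤ x ^ (-(M/2)) :=
    Real.rpow_le_rpow_of_nonpos hx (le_jb hx.le) (by linarith)
  calc x ^ c * jb x ^ (-(M/2)) ≤ x ^ c * x ^ (-(M/2)) :=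
        mul_le_mul_of_nonneg_left h1 (Real.rpow_nonneg hx.le _)
    _ = x ^ (c - M/2) := by rw [← Real.rpow_add hx, sub_eq_add_neg]

/-- Upper bound: C₃²³⁴[n⁰¹,n⁰¹,n⁰¹](ω₁) ≲ ω₁^{2β + 1/2 − M/2} for ω₁ > 1. -/
theorem C3_upper_bound (β M : ℝ) (hβ0 : 0 ≤ β) (hβ1 : β ≤ 1) (hM : 6 < M) :
    ∃ C : ℝ, 0 < C ∧ ∀ ω₁ : ℝ, 1 < ω₁ →
      C3op β (n01 M) (n01 M) (n01 M) ω₁ ≤ C * ω₁ ^ (2 * β + 1/2 - M / 2) := by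
  have hA : (0:ℝ) < M/2 - β - 1 := by linarith
  have hA' : (0:ℝ) < M/2 - β - 3/2 := by linarith
  have he4 : β - M/2 < -1 := by linarith
  have he3 : β + 1/2 - M/2 < -1 := by linarith
  have hπ : (0:ℝ) < π := Real.pi_pos
  have hB : (0:ℝ) < 1 + 1/(M/2 - β - 3/2) := by
    have := one_div_pos.2 hA'; linarith
  refine ⟨64 * π ^ 3 * (1 + 1/(M/2 - β - 3/2)) / (M/2 - β - 1),
    div_pos (mul_pos (by positivity) hB) hA, fun ω₁ hω₁ => ?_⟩
  have hω₀ : (0:ℝ) < ω₁ := by linarith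
  -- dominating function for the outer integral
  set m : ℝ → ℝ := fun x => min 1 (x ^ (β + 1/2 - M/2)) with hmdef
  have hm_cont : ContinuousOn m (Ioc 0 ω₁) := by
    intro x hx
    exact ContinuousWithinAt.inf continuousWithinAt_const
      ((Real.continuousAt_rpow_const x _ (Or.inl (ne_of_gt hx.1))).continuousWithinAt)
  have hm_int : IntegrableOn m (Ioc 0 ω₁) := by
    apply Integrable.mono' (integrableOn_const (C := (1:ℝ)) measure_Ioc_lt_top.ne)
      (hm_cont.aestronglyMeasurable measurableSet_Ioc)
    filter_upwards [self_mem_ae_restrict measurableSet_Ioc] with x hx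
    have hx0 : 0 ≤ x ^ (β + 1/2 - M/2) := Real.rpow_nonneg hx.1.le _
    rw [Real.norm_eq_abs, abs_of_nonneg (le_min zero_le_one hx0)]
    exact min_le_left _ _
  -- value of the inner comparison integral
  have hJ : ∫ x in Ioi ω₁, x ^ (β - M/2) = ω₁ ^ (β + 1 - M/2) / (M/2 - β - 1) := by
    rw [integral_Ioi_rpow_of_lt he4 hω₀,
      show β - M/2 + 1 = β + 1 - M/2 by ring,
      div_eq_div_iff (by intro h; linarith : β + 1 - M/2 ≠ 0) (ne_of_gt hA)]
    ring
  have hJ0 : 0 ≤ ω₁ ^ (β + 1 - M/2) / (M/2 - β - 1) :=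
    div_nonneg (Real.rpow_nonneg hω₀.le _) hA.le
  -- nonnegativity of the integrand
  have hFnn : ∀ ω₃ ∈ Ioc (0:ℝ) ω₁, ∀ ω₄ ∈ Ioi ω₁,
      0 ≤ (ω₃ + ω₄ - ω₁) ^ β * ω₃ ^ (β + 1/2) * ω₄ ^ β *
        (n01 M (ω₃ + ω₄ - ω₁) * n01 M ω₃ * n01 M ω₄) := by
    intro ω₃ hω₃ ω₄ hω₄
    have hω₄' : ω₁ < ω₄ := hω₄
    have h2 : (0:ℝ) ≤ ω₃ + ω₄ - ω₁ := by have := hω₃.1; linarith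
    have h4 : (0:ℝ) ≤ ω₄ := by linarith
    exact mul_nonneg (mul_nonneg (mul_nonneg (Real.rpow_nonneg h2 _)
      (Real.rpow_nonneg hω₃.1.le _)) (Real.rpow_nonneg h4 _))
      (mul_nonneg (mul_nonneg (n01_nonneg M _) (n01_nonneg M _)) (n01_nonneg M _))
  -- inner integral bound
  have hinner : ∀ ω₃ ∈ Ioc (0:ℝ) ω₁,
      (∫ ω₄ in Ioi ω₁, (ω₃ + ω₄ - ω₁) ^ β * ω₃ ^ (β + 1/2) * ω₄ ^ β *
          (n01 M (ω₃ + ω₄ - ω₁) * n01 M ω₃ * n01 M ω₄))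
        ≤ (ω₃ ^ (β + 1/2) * n01 M ω₃) * (ω₁ ^ (β + 1 - M/2) / (M/2 - β - 1)) := by
    intro ω₃ hω₃
    have hf3 : 0 ≤ ω₃ ^ (β + 1/2) * n01 M ω₃ :=
      mul_nonneg (Real.rpow_nonneg hω₃.1.le _) (n01_nonneg M _)
    rw [← hJ, ← integral_const_mul]
    apply integral_mono_of_nonneg
    · filter_upwards [self_mem_ae_restrict measurableSet_Ioi] with ω₄ hω₄
      exact hFnn ω₃ hω₃ ω₄ hω₄
    · exact (integrableOn_Ioi_rpow_of_lt he4 hω₀).const_mul _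
    · filter_upwards [self_mem_ae_restrict measurableSet_Ioi] with ω₄ hω₄
      have hω₄' : ω₁ < ω₄ := hω₄
      have h2 : (0:ℝ) ≤ ω₃ + ω₄ - ω₁ := by have := hω₃.1; linarith
      have h4 : (0:ℝ) < ω₄ := by linarith
      have e1 : (ω₃ + ω₄ - ω₁) ^ β * n01 M (ω₃ + ω₄ - ω₁) ≤ 1 := keyA hβ0 (by linarith) h2
      have e2 : ω₄ ^ β * n01 M ω₄ ≤ ω₄ ^ (β - M/2) := keyB (by linarith) h4
      have hprod : (ω₃ + ω₄ - ω₁) ^ β * ω₃ ^ (β + 1/2) * ω₄ ^ β *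
          (n01 M (ω₃ + ω₄ - ω₁) * n01 M ω₃ * n01 M ω₄)
          = ((ω₃ + ω₄ - ω₁) ^ β * n01 M (ω₃ + ω₄ - ω₁)) *
            ((ω₃ ^ (β + 1/2) * n01 M ω₃) * (ω₄ ^ β * n01 M ω₄)) := by ring
      rw [hprod]
      calc ((ω₃ + ω₄ - ω₁) ^ β * n01 M (ω₃ + ω₄ - ω₁)) *
            ((ω₃ ^ (β + 1/2) * n01 M ω₃) * (ω₄ ^ β * n01 M ω₄))
          ≤ 1 * ((ω₃ ^ (β + 1/2) * n01 M ω₃) * (ω₄ ^ β * n01 M ω₄)) :=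
            mul_le_mul_of_nonneg_right e1 (mul_nonneg hf3
              (mul_nonneg (Real.rpow_nonneg h4.le _) (n01_nonneg M _)))
        _ = (ω₃ ^ (β + 1/2) * n01 M ω₃) * (ω₄ ^ β * n01 M ω₄) := one_mul _
        _ ≤ (ω₃ ^ (β + 1/2) * n01 M ω₃) * ω₄ ^ (β - M/2) :=
            mul_le_mul_of_nonneg_left e2 hf3
  -- outer integral bound
  have houter : (∫ ω₃ in (0:ℝ)..ω₁, ∫ ω₄ in Ioi ω₁,
        (ω₃ + ω₄ - ω₁) ^ β * ω₃ ^ (β + 1/2) * ω₄ ^ β *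
          (n01 M (ω₃ + ω₄ - ω₁) * n01 M ω₃ * n01 M ω₄))
      ≤ (ω₁ ^ (β + 1 - M/2) / (M/2 - β - 1)) * ∫ x in Ioc (0:ℝ) ω₁, m x := by
    rw [intervalIntegral.integral_of_le hω₀.le, ← integral_const_mul]
    apply integral_mono_of_nonneg
    · filter_upwards [self_mem_ae_restrict measurableSet_Ioc] with ω₃ hω₃
      exact setIntegral_nonneg measurableSet_Ioi (fun ω₄ hω₄ => hFnn ω₃ hω₃ ω₄ hω₄)
    · exact hm_int.const_mul _
    · filter_upwards [self_mem_ae_restrict measurableSet_Ioc] with ω₃ hω₃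
      have hfm : ω₃ ^ (β + 1/2) * n01 M ω₃ ≤ m ω₃ :=
        le_min (keyA (by linarith) (by linarith) hω₃.1.le) (keyB (by linarith) hω₃.1)
      calc (∫ ω₄ in Ioi ω₁, (ω₃ + ω₄ - ω₁) ^ β * ω₃ ^ (β + 1/2) * ω₄ ^ β *
              (n01 M (ω₃ + ω₄ - ω₁) * n01 M ω₃ * n01 M ω₄))
          ≤ (ω₃ ^ (β + 1/2) * n01 M ω₃) * (ω₁ ^ (β + 1 - M/2) / (M/2 - β - 1)) :=
            hinner ω₃ hω₃
        _ ≤ m ω₃ * (ω₁ ^ (β + 1 - M/2) / (M/2 - β - 1)) :=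
            mul_le_mul_of_nonneg_right hfm hJ0
        _ = (ω₁ ^ (β + 1 - M/2) / (M/2 - β - 1)) * m ω₃ := mul_comm _ _
  -- bound the integral of m
  have hm_bound : (∫ x in Ioc (0:ℝ) ω₁, m x) ≤ 1 + 1/(M/2 - β - 3/2) := by
    have hint1 : IntegrableOn m (Ioc 0 1) :=
      hm_int.mono_set (Set.Ioc_subset_Ioc_right hω₁.le)
    have hint2 : IntegrableOn m (Ioc 1 ω₁) :=
      hm_int.mono_set (Set.Ioc_subset_Ioc_left zero_le_one)
    have hrint : IntegrableOn (fun x : ℝ => x ^ (β + 1/2 - M/2)) (Ioi 1) :=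
      integrableOn_Ioi_rpow_of_lt he3 one_pos
    have hrint2 : IntegrableOn (fun x : ℝ => x ^ (β + 1/2 - M/2)) (Ioc 1 ω₁) :=
      hrint.mono_set Set.Ioc_subset_Ioi_self
    rw [← Set.Ioc_union_Ioc_eq_Ioc zero_le_one hω₁.le,
      setIntegral_union (Set.Ioc_disjoint_Ioc_of_le le_rfl) measurableSet_Ioc hint1 hint2]
    have h1 : (∫ x in Ioc (0:ℝ) 1, m x) ≤ 1 := by
      calc (∫ x in Ioc (0:ℝ) 1, m x) ≤ ∫ _ in Ioc (0:ℝ) 1, (1:ℝ) :=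
            integral_mono hint1 (integrableOn_const measure_Ioc_lt_top.ne)
              (fun x => min_le_left _ _)
        _ = 1 := by simp [Real.volume_Ioc]
    have h2 : (∫ x in Ioc (1:ℝ) ω₁, m x) ≤ 1/(M/2 - β - 3/2) := by
      calc (∫ x in Ioc (1:ℝ) ω₁, m x) ≤ ∫ x in Ioc (1:ℝ) ω₁, x ^ (β + 1/2 - M/2) :=
            integral_mono hint2 hrint2 (fun x => min_le_right _ _)
        _ ≤ ∫ x in Ioi (1:ℝ), x ^ (β + 1/2 - M/2) := by
            apply setIntegral_mono_set hrint
            · filter_upwards [self_mem_ae_restrict measurableSet_Ioi] with x hx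
              exact Real.rpow_nonneg (by linarith [Set.mem_Ioi.mp hx] : (0:ℝ) ≤ x) _
            · exact HasSubset.Subset.eventuallyLE Set.Ioc_subset_Ioi_self
        _ = 1/(M/2 - β - 3/2) := by
            rw [integral_Ioi_rpow_of_lt he3 one_pos, Real.one_rpow,
              div_eq_div_iff (by intro h; linarith : β + 1/2 - M/2 + 1 ≠ 0) (ne_of_gt hA')]
            ring
    linarith
  -- assemble
  have hcoef : (0:ℝ) ≤ 64 * π ^ 3 * ω₁ ^ (β - 1/2) := by positivity
  have hchain : (∫ ω₃ in (0:ℝ)..ω₁, ∫ ω₄ in Ioi ω₁,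
        (ω₃ + ω₄ - ω₁) ^ β * ω₃ ^ (β + 1/2) * ω₄ ^ β *
          (n01 M (ω₃ + ω₄ - ω₁) * n01 M ω₃ * n01 M ω₄))
      ≤ (ω₁ ^ (β + 1 - M/2) / (M/2 - β - 1)) * (1 + 1/(M/2 - β - 3/2)) :=
    houter.trans (mul_le_mul_of_nonneg_left hm_bound hJ0)
  calc C3op β (n01 M) (n01 M) (n01 M) ω₁
      = 64 * π ^ 3 * ω₁ ^ (β - 1/2) * ∫ ω₃ in (0:ℝ)..ω₁, ∫ ω₄ in Ioi ω₁,
          (ω₃ + ω₄ - ω₁) ^ β * ω₃ ^ (β + 1/2) * ω₄ ^ β *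
            (n01 M (ω₃ + ω₄ - ω₁) * n01 M ω₃ * n01 M ω₄) := rfl
    _ ≤ 64 * π ^ 3 * ω₁ ^ (β - 1/2) *
          ((ω₁ ^ (β + 1 - M/2) / (M/2 - β - 1)) * (1 + 1/(M/2 - β - 3/2))) :=
        mul_le_mul_of_nonneg_left hchain hcoef
    _ = (64 * π ^ 3 * (1 + 1/(M/2 - β - 3/2)) / (M/2 - β - 1)) *
          (ω₁ ^ (β - 1/2) * ω₁ ^ (β + 1 - M/2)) := by ring
    _ = (64 * π ^ 3 * (1 + 1/(M/2 - β - 3/2)) / (M/2 - β - 1)) *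
          ω₁ ^ (2 * β + 1/2 - M / 2) := by
        rw [← Real.rpow_add hω₀, show β - 1/2 + (β + 1 - M/2) = 2 * β + 1/2 - M / 2 by ring]
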